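/- Let G be a connected simple graph on n vertices and let G' be the graph obtained from G by adding one new vertex adjacent to every vertex of G. Then L(G') = \sum_{k=0}^{n} (n-k)! \cdot L_k(G), where L_0(G) = 1. -/

import Mathlib

open Finset

/-- A sequence of `k` distinct vertices of `G` such that every vertex other than the
first is adjacent to some earlier vertex (a random walk labeling disrupted after the
`k`-th vertex). -/
def IsRWLPrefix {V : Type*} (G : SimpleGraph V) {k : ℕ} (v : Fin k → V) : Prop :=
  Function.Injective v ∧ ∀ i : Fin k, i.val ≠ 0 → ∃ j : Fin k, j < i ∧ G.Adj (v j) (v i)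

/-- `L_k(G)`: the number of random walk labelings of `G` disrupted after the `k`-th
vertex.  For `k = 0` this equals `1` (the empty sequence). -/
noncomputable def rwlPrefixCount {V : Type*} (G : SimpleGraph V) (k : ℕ) : ℕ :=
  Nat.card {v : Fin k → V // IsRWLPrefix G v}

/-- `L(G)`: the number of random walk labelings of `G`, i.e. orderings of all the
vertices of `G` in which every vertex other than the first is adjacent to some
earlier vertex. -/
noncomputable def rwlCount {V : Type*} (G : SimpleGraph V) [Fintype V] : ℕ :=
  rwlPrefixCount G (Fintype.card V)

/-- The cone over `G`: a new vertex (`none`) joined to every vertex of `G`. -/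
def SimpleGraph.cone {V : Type*} (G : SimpleGraph V) : SimpleGraph (Option V) :=
  SimpleGraph.fromRel (fun a b =>
    match a, b with
    | none, some _ => True
    | some x, some y => G.Adj x y
    | _, _ => False)

section Helpers

-- auxiliary lemmas
variable {V : Type*} {G : SimpleGraph V}

lemma cone_adj_none_some (x : V) : G.cone.Adj none (some x) :=
  (SimpleGraph.fromRel_adj _ _ _).2 ⟨by simp, Or.inl trivial⟩

lemma cone_adj_some_some {x y : V} : G.cone.Adj (some x) (some y) ↔ G.Adj x y := by
  rw [SimpleGraph.cone, SimpleGraph.fromRel_adj]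
  constructor
  · rintro ⟨-, h | h⟩
    · exact h
    · exact h.symm
  · exact fun h => ⟨by simpa using h.ne, Or.inl h⟩

def coneFun {n k : ℕ} (p : Fin k → V) (q : Fin (n - k) → V) : Fin (n + 1) → Option V :=
  fun i =>
    if h : i.val < k then some (p ⟨i.val, h⟩)
    else if h2 : i.val = k then none
    else some (q ⟨i.val - k - 1, by omega⟩)

lemma coneFun_lt {n k : ℕ} (p : Fin k → V) (q : Fin (n - k) → V) {i : Fin (n + 1)}
    (h : i.val < k) : coneFun p q i = some (p ⟨i.val, h⟩) := dif_pos h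

lemma coneFun_eq {n k : ℕ} (p : Fin k → V) (q : Fin (n - k) → V) {i : Fin (n + 1)}
    (h : i.val = k) : coneFun p q i = none := by
  rw [coneFun, dif_neg (by omega), dif_pos h]

lemma coneFun_gt {n k : ℕ} (p : Fin k → V) (q : Fin (n - k) → V) {i : Fin (n + 1)}
    (h : k < i.val) :
    coneFun p q i = some (q ⟨i.val - k - 1, by omega⟩) := by
  rw [coneFun, dif_neg (by omega), dif_neg (by omega)]

lemma coneFun_inj {n k : ℕ} {p : Fin k → V} {q : Fin (n - k) → V}
    (hp : Function.Injective p) (hq : Function.Injective q)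
    (hpq : ∀ i, q i ∉ Set.range p) : Function.Injective (coneFun p q) := by
  intro a b hab
  rcases Nat.lt_trichotomy a.val k with ha | ha | ha <;>
    rcases Nat.lt_trichotomy b.val k with hb | hb | hb
  · rw [coneFun_lt p q ha, coneFun_lt p q hb] at hab
    have := congrArg Fin.val (hp (Option.some_injective _ hab))
    simp only at this
    exact Fin.ext this
  · rw [coneFun_lt p q ha, coneFun_eq p q hb] at hab
    exact absurd hab (by simp)
  · rw [coneFun_lt p q ha, coneFun_gt p q hb] at hab
    exact absurd ⟨_, (Option.some_injective _ hab)⟩ (hpq _)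
  · rw [coneFun_eq p q ha, coneFun_lt p q hb] at hab
    exact absurd hab.symm (by simp)
  · exact Fin.ext (ha.trans hb.symm)
  · rw [coneFun_eq p q ha, coneFun_gt p q hb] at hab
    exact absurd hab.symm (by simp)
  · rw [coneFun_gt p q ha, coneFun_lt p q hb] at hab
    exact absurd ⟨_, (Option.some_injective _ hab.symm)⟩ (hpq _)
  · rw [coneFun_gt p q ha, coneFun_eq p q hb] at hab
    exact absurd hab (by simp)
  · rw [coneFun_gt p q ha, coneFun_gt p q hb] at hab
    have := hq (Option.some_injective _ hab)
    have := congrArg Fin.val this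
    simp only at this
    exact Fin.ext (by omega)

lemma coneFun_isPrefix {n k : ℕ} {p : Fin k → V} {q : Fin (n - k) → V}
    (hp : IsRWLPrefix G p) (hq : Function.Injective q)
    (hpq : ∀ i, q i ∉ Set.range p) (hk : k ≤ n) :
    IsRWLPrefix G.cone (coneFun p q) := by
  refine ⟨coneFun_inj hp.1 hq hpq, ?_⟩
  intro i hi0
  rcases Nat.lt_trichotomy i.val k with hik | hik | hik
  · obtain ⟨j, hji, hadj⟩ := hp.2 ⟨i.val, hik⟩ hi0
    refine ⟨⟨j.val, by omega⟩, by simpa [Fin.lt_def] using hji, ?_⟩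
    rw [coneFun_lt p q (show (⟨j.val, by omega⟩ : Fin (n+1)).val < k from j.isLt),
      coneFun_lt p q hik]
    rw [cone_adj_some_some]
    simpa [Fin.eta] using hadj
  · refine ⟨⟨0, by omega⟩, by rw [Fin.lt_def]; show 0 < i.val; omega, ?_⟩
    rw [coneFun_eq p q hik, coneFun_lt p q (show (0:ℕ) < k by omega)]
    exact (cone_adj_none_some _).symm
  · refine ⟨⟨k, by omega⟩, by simp [Fin.lt_def]; omega, ?_⟩
    rw [coneFun_eq p q rfl, coneFun_gt p q hik]
    exact cone_adj_none_some _

abbrev ConeData (G : SimpleGraph V) (n : ℕ) : Type _ :=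
  Σ k : Fin (n + 1), Σ p : {p : Fin k.val → V // IsRWLPrefix G p},
    (Fin (n - k.val) ↪ {x : V // x ∉ Set.range p.val})

variable [Fintype V]

lemma prefix_le_card {k : ℕ} {p : Fin k → V} (hp : IsRWLPrefix G p) :
    k ≤ Fintype.card V := by
  simpa using Fintype.card_le_of_injective p hp.1

noncomputable def coneMap (G : SimpleGraph V) [Fintype V]
    (d : ConeData G (Fintype.card V)) :
    {v : Fin (Fintype.card V + 1) → Option V // IsRWLPrefix G.cone v} :=
  ⟨coneFun d.2.1.val (fun i => (d.2.2 i).val),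
    coneFun_isPrefix d.2.1.2
      (fun i j h => d.2.2.injective (Subtype.ext h))
      (fun i => (d.2.2 i).2) (prefix_le_card d.2.1.2)⟩

lemma coneMap_injective : Function.Injective (coneMap G) := by
  rintro ⟨k1, ⟨p1, hp1⟩, q1⟩ ⟨k2, ⟨p2, hp2⟩, q2⟩ h
  have hfun : coneFun p1 (fun i => (q1 i).val) = coneFun p2 (fun i => (q2 i).val) :=
    congrArg Subtype.val h
  have hk : k1 = k2 := by
    by_contra hne
    rcases Nat.lt_trichotomy k1.val k2.val with h12 | h12 | h12
    · have := congrFun hfun k1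
      rw [coneFun_eq _ _ rfl, coneFun_lt _ _ h12] at this
      exact absurd this.symm (by simp)
    · exact hne (Fin.ext h12)
    · have := congrFun hfun k2
      rw [coneFun_lt _ _ h12, coneFun_eq _ _ rfl] at this
      exact absurd this (by simp)
  subst hk
  have hp : p1 = p2 := by
    funext i
    have := congrFun hfun ⟨i.val, by omega⟩
    rw [coneFun_lt _ _ (show i.val < k1.val from i.isLt),
      coneFun_lt _ _ (show i.val < k1.val from i.isLt)] at this
    simpa [Fin.eta] using this
  subst hp
  have hq : q1 = q2 := by
    refine Function.Embedding.ext fun i => Subtype.ext ?_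
    have hlt : k1.val + 1 + i.val < Fintype.card V + 1 := by
      have := i.isLt; omega
    have := congrFun hfun ⟨k1.val + 1 + i.val, hlt⟩
    rw [coneFun_gt _ _ (show k1.val < k1.val + 1 + i.val by omega),
      coneFun_gt _ _ (show k1.val < k1.val + 1 + i.val by omega)] at this
    simp only [show k1.val + 1 + i.val - k1.val - 1 = i.val from by omega, Fin.eta,
      Option.some.injEq] at this
    exact this
  subst hq
  rfl

lemma coneMap_surjective : Function.Surjective (coneMap G) := by
  rintro ⟨v, hv⟩
  have hbij : Function.Bijective v := by
    rw [Fintype.bijective_iff_injective_and_card]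
    exact ⟨hv.1, by simp⟩
  obtain ⟨a, ha⟩ := hbij.2 none
  have hsome : ∀ i : Fin (Fintype.card V + 1), i ≠ a → (v i).isSome := by
    intro i hi
    rw [Option.isSome_iff_ne_none]
    intro hnone
    exact hi (hv.1 (hnone.trans ha.symm))
  have hne : ∀ (m : ℕ) (hm : m < Fintype.card V + 1), m ≠ a.val →
      (⟨m, hm⟩ : Fin (Fintype.card V + 1)) ≠ a := by
    intro m hm h he
    exact h (by rw [← he])
  -- the prefix
  set p : Fin a.val → V := fun i =>
    (v ⟨i.val, by omega⟩).get (hsome _ (hne _ _ (by omega))) with hp_def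
  have hvp : ∀ i : Fin a.val, v ⟨i.val, by omega⟩ = some (p i) :=
    fun i => (Option.some_get _).symm
  have hp : IsRWLPrefix G p := by
    constructor
    · intro i j hij
      have : v ⟨i.val, by omega⟩ = v ⟨j.val, by omega⟩ := by
        rw [hvp i, hvp j, hij]
      have := congrArg Fin.val (hv.1 this)
      simp only at this
      exact Fin.ext this
    · intro i hi0
      obtain ⟨j, hji, hadj⟩ := hv.2 ⟨i.val, by omega⟩ (by simpa using hi0)
      have hji' : j.val < i.val := by
        rw [Fin.lt_def] at hji
        simpa using hji
      have hjlt : j.val < a.val := by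
        have := i.isLt; omega
      refine ⟨⟨j.val, hjlt⟩, by rw [Fin.lt_def]; exact hji', ?_⟩
      rw [← cone_adj_some_some (G := G)]
      have h1 : v j = some (p ⟨j.val, hjlt⟩) := by
        rw [← hvp ⟨j.val, hjlt⟩]
      have h2 : v ⟨i.val, by omega⟩ = some (p i) := hvp i
      rw [← h1, ← h2]
      exact hadj
  -- the suffix
  have hqlt : ∀ i : Fin (Fintype.card V - a.val),
      a.val + 1 + i.val < Fintype.card V + 1 := by
    intro i; have := i.isLt; omega
  set q0 : Fin (Fintype.card V - a.val) → V := fun i =>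
    (v ⟨a.val + 1 + i.val, hqlt i⟩).get (hsome _ (hne _ _ (by omega))) with hq_def
  have hvq : ∀ i, v ⟨a.val + 1 + i.val, hqlt i⟩ = some (q0 i) :=
    fun i => (Option.some_get _).symm
  have hq0inj : Function.Injective q0 := by
    intro i j hij
    have : v ⟨a.val + 1 + i.val, hqlt i⟩ = v ⟨a.val + 1 + j.val, hqlt j⟩ := by
      rw [hvq i, hvq j, hij]
    have := congrArg Fin.val (hv.1 this)
    simp only at this
    exact Fin.ext (by omega)
  have hq0r : ∀ i, q0 i ∉ Set.range p := by
    rintro i ⟨m, hm⟩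
    have : v ⟨m.val, by omega⟩ = v ⟨a.val + 1 + i.val, hqlt i⟩ := by
      rw [hvq i, hvp m, hm]
    have := congrArg Fin.val (hv.1 this)
    simp only at this
    omega
  refine ⟨⟨a, ⟨p, hp⟩, ⟨fun i => ⟨q0 i, hq0r i⟩, fun i j hij =>
    hq0inj (congrArg Subtype.val hij)⟩⟩, ?_⟩
  apply Subtype.ext
  funext i
  show coneFun p q0 i = v i
  rcases Nat.lt_trichotomy i.val a.val with hia | hia | hia
  · rw [coneFun_lt _ _ hia, ← hvp ⟨i.val, hia⟩]
  · have : i = a := Fin.ext hia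
    rw [coneFun_eq _ _ hia, this, ha]
  · rw [coneFun_gt _ _ hia]
    have hidx : (⟨a.val + 1 + (⟨i.val - a.val - 1, by omega⟩ :
        Fin (Fintype.card V - a.val)).val,
        hqlt ⟨i.val - a.val - 1, by omega⟩⟩ : Fin (Fintype.card V + 1)) = i :=
      Fin.ext (by simp only; omega)
    rw [← hvq ⟨i.val - a.val - 1, by omega⟩, hidx]

theorem rwlCount_cone' (G : SimpleGraph V) :
    rwlCount G.cone =
      ∑ k ∈ Finset.range (Fintype.card V + 1),
        (Fintype.card V - k).factorial * rwlPrefixCount G k := by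
  classical
  have h1 : rwlCount G.cone = Nat.card {v : Fin (Fintype.card V + 1) → Option V //
      IsRWLPrefix G.cone v} := by
    have : Fintype.card (Option V) = Fintype.card V + 1 := Fintype.card_option
    rw [rwlCount, this, rwlPrefixCount]
  rw [h1, ← Nat.card_eq_of_bijective (coneMap G) ⟨coneMap_injective, coneMap_surjective⟩]
  rw [Nat.card_eq_fintype_card, Fintype.card_sigma, ← Fin.sum_univ_eq_sum_range]
  refine Finset.sum_congr rfl fun k _ => ?_
  rw [Fintype.card_sigma]
  have hcardemb : ∀ p : {p : Fin k.val → V // IsRWLPrefix G p},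
      Fintype.card (Fin (Fintype.card V - k.val) ↪ {x : V // x ∉ Set.range p.val}) =
        (Fintype.card V - k.val).factorial := by
    intro p
    rw [Fintype.card_embedding_eq]
    have hr : Fintype.card {x : V // x ∉ Set.range p.val} = Fintype.card V - k.val := by
      have h2 : Fintype.card {x : V // x ∈ Set.range p.val} = k.val := by
        have h3 : Nat.card (Set.range p.val) = k.val := by
          rw [Nat.card_range_of_injective p.2.1, Nat.card_eq_fintype_card, Fintype.card_fin]
        rw [← Nat.card_eq_fintype_card]
        exact h3
      rw [Fintype.card_subtype_compl, h2]
    rw [hr, Fintype.card_fin, Nat.descFactorial_self]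
  rw [Finset.sum_congr rfl fun p _ => hcardemb p, Finset.sum_const, Finset.card_univ,
    rwlPrefixCount, Nat.card_eq_fintype_card, smul_eq_mul, mul_comm]

end Helpers

theorem rwlCount_cone {V : Type*} [Fintype V] (G : SimpleGraph V)
    (hG : G.Connected) :
    rwlCount G.cone =
      ∑ k ∈ Finset.range (Fintype.card V + 1),
        (Fintype.card V - k).factorial * rwlPrefixCount G k := by
  exact rwlCount_cone' G
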